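/- Let Y be a linear subspace of ℂ² with Y ≠ {0} and Y ≠ {0} × ℂ. Then for every g ∈ L²((0,1),ℂ) and every ε > 0 there exists f ∈ L²((0,1),ℂ) with (μ₀(f), μ₁(f)) ∈ Y such that (‖P(g−f)‖²_{L²(0,1)} + |μ₀(g−f)|²)^{1/2} < ε. (Density of V_Y = {f ∈ L² : (μ₀(f),μ₁(f)) ∈ Y} in H⁻¹(T).) -/

import Mathlib

open MeasureTheory intervalIntegral

/-- `𝓘g(x) = ∫₀ˣ g(y) dy` -/
noncomputable def Iprim (g : ℝ → ℂ) (x : ℝ) : ℂ := ∫ y in (0:ℝ)..x, g y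

/-- `Pg(x) = 𝓘g(x) − ∫₀¹ 𝓘g(z) dz` -/
noncomputable def Pfun (g : ℝ → ℂ) (x : ℝ) : ℂ := Iprim g x - ∫ z in (0:ℝ)..1, Iprim g z

/-- `μ₀(g) = ∫₀¹ g(x) dx` -/
noncomputable def mu0 (g : ℝ → ℂ) : ℂ := ∫ x in (0:ℝ)..1, g x

/-- `μ₁(g) = ∫₀¹ (1−x) g(x) dx` -/
noncomputable def mu1 (g : ℝ → ℂ) : ℂ := ∫ x in (0:ℝ)..1, ((1 - x : ℝ) : ℂ) * g x


noncomputable def hre (n : ℕ) (x : ℝ) : ℝ := ((n:ℝ)+1)*((1-x)^n - x^n)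

lemma contInt (n : ℕ) (a b : ℝ) : IntervalIntegrable (fun y : ℝ => (1-y)^n) volume a b :=
  Continuous.intervalIntegrable (by continuity) a b

lemma int_onesub_pow (n : ℕ) (x : ℝ) :
    ∫ y in (0:ℝ)..x, (1-y)^n = (1 - (1-x)^(n+1))/((n:ℝ)+1) := by
  have h := intervalIntegral.integral_comp_sub_left (a := 0) (b := x) (fun y => y^n) 1
  rw [h, integral_pow]
  ring

lemma int_hre (n : ℕ) (x : ℝ) :
    ∫ y in (0:ℝ)..x, hre n y = 1 - (1-x)^(n+1) - x^(n+1) := by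
  unfold hre
  rw [intervalIntegral.integral_const_mul,
    intervalIntegral.integral_sub (contInt n 0 x)
      (Continuous.intervalIntegrable (by continuity) 0 x),
    int_onesub_pow, integral_pow]
  have h : ((n:ℝ)+1) ≠ 0 := by positivity
  field_simp
  simp

-- ∫₀¹ (1 - (1-z)^(n+1) - z^(n+1)) dz = n/(n+2)
lemma int_F (n : ℕ) :
    ∫ z in (0:ℝ)..1, (1 - (1-z)^(n+1) - z^(n+1)) = (n:ℝ)/((n:ℝ)+2) := by
  have h1 : IntervalIntegrable (fun z : ℝ => (1:ℝ) - (1-z)^(n+1)) volume 0 1 :=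
    Continuous.intervalIntegrable (by continuity) 0 1
  have h2 : IntervalIntegrable (fun z : ℝ => z^(n+1)) volume 0 1 :=
    Continuous.intervalIntegrable (by continuity) 0 1
  rw [intervalIntegral.integral_sub h1 h2,
    intervalIntegral.integral_sub (intervalIntegrable_const) (contInt (n+1) 0 1),
    int_onesub_pow, integral_pow]
  simp only [intervalIntegral.integral_const]
  push_cast
  have h : ((n:ℝ)+1+1) ≠ 0 := by positivity
  have h2 : ((n:ℝ)+2) ≠ 0 := by positivity
  field_simp
  ring_nf

-- mu1 of hre: ∫₀¹ (1-x) * hre n x dx = n/(n+2)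
lemma int_mu1_hre (n : ℕ) :
    ∫ x in (0:ℝ)..1, (1-x) * hre n x = (n:ℝ)/((n:ℝ)+2) := by
  have key : ∀ x : ℝ, (1-x) * hre n x
      = ((n:ℝ)+1)*(1-x)^(n+1) - ((n:ℝ)+1)*(x^n - x^(n+1)) := by
    intro x; unfold hre; ring
  simp only [key]
  have h1 : IntervalIntegrable (fun x : ℝ => ((n:ℝ)+1)*(1-x)^(n+1)) volume 0 1 :=
    Continuous.intervalIntegrable (by continuity) 0 1
  have h2 : IntervalIntegrable (fun x : ℝ => ((n:ℝ)+1)*(x^n - x^(n+1))) volume 0 1 :=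
    Continuous.intervalIntegrable (by continuity) 0 1
  rw [intervalIntegral.integral_sub h1 h2, intervalIntegral.integral_const_mul,
    intervalIntegral.integral_const_mul,
    intervalIntegral.integral_sub (Continuous.intervalIntegrable (by continuity) 0 1)
      (Continuous.intervalIntegrable (by continuity) 0 1),
    int_onesub_pow, integral_pow, integral_pow]
  push_cast
  have ha : ((n:ℝ)+1+1) ≠ 0 := by positivity
  have hb : ((n:ℝ)+2) ≠ 0 := by positivity
  have hc : ((n:ℝ)+1) ≠ 0 := by positivity
  field_simp
  ring

noncomputable def phi (n : ℕ) (x : ℝ) : ℝ := 2/((n:ℝ)+2) - (1-x)^(n+1) - x^(n+1)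

lemma int_phi_sq (n : ℕ) (hn : 1 ≤ n) :
    ∫ x in (0:ℝ)..1, (phi n x)^2 ≤ 15/(n:ℝ) := by
  have hnpos : (0:ℝ) < n := by exact_mod_cast hn
  have hmono : ∫ x in (0:ℝ)..1, (phi n x)^2
      ≤ ∫ x in (0:ℝ)..1, 3*((2/((n:ℝ)+2))^2 + ((1-x)^(n+1))^2 + (x^(n+1))^2) := by
    apply intervalIntegral.integral_mono_on (by norm_num)
    · exact Continuous.intervalIntegrable (by unfold phi; continuity) 0 1
    · exact Continuous.intervalIntegrable (by continuity) 0 1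
    · intro x _
      unfold phi
      nlinarith [sq_nonneg (2/((n:ℝ)+2) + (1-x)^(n+1)),
        sq_nonneg (2/((n:ℝ)+2) + x^(n+1)),
        sq_nonneg ((1-x)^(n+1) - x^(n+1))]
  refine hmono.trans ?_
  have e1 : ∀ x : ℝ, ((1-x)^(n+1))^2 = (1-x)^(2*n+2) := by intro x; rw [← pow_mul]; ring_nf
  have e2 : ∀ x : ℝ, (x^(n+1))^2 = x^(2*n+2) := by intro x; rw [← pow_mul]; ring_nf
  have hval : ∫ x in (0:ℝ)..1, 3*((2/((n:ℝ)+2))^2 + ((1-x)^(n+1))^2 + (x^(n+1))^2)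
      = 3*((2/((n:ℝ)+2))^2 + 2/(2*(n:ℝ)+3)) := by
    simp only [e1, e2]
    rw [intervalIntegral.integral_const_mul,
      intervalIntegral.integral_add (by apply IntervalIntegrable.add <;>
        exact Continuous.intervalIntegrable (by continuity) 0 1)
        (Continuous.intervalIntegrable (by continuity) 0 1),
      intervalIntegral.integral_add intervalIntegrable_const
        (contInt (2*n+2) 0 1),
      int_onesub_pow, integral_pow]
    have h3 : (2*(n:ℝ)+3) ≠ 0 := by positivity
    push_cast
    simp only [intervalIntegral.integral_const, smul_eq_mul, mul_one, sub_self]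
    field_simp
    ring
  rw [hval]
  have h1 : ((n:ℝ)+2) ≠ 0 := by positivity
  have h23 : (0:ℝ) < 2*(n:ℝ)+3 := by positivity
  rw [show (3:ℝ) * ((2 / ((n:ℝ) + 2)) ^ 2 + 2 / (2 * (n:ℝ) + 3))
      = (12*(2*(n:ℝ)+3) + 6*((n:ℝ)+2)^2) / (((n:ℝ)+2)^2*(2*(n:ℝ)+3)) by field_simp; ring,
    div_le_div_iff₀ (by positivity) hnpos]
  nlinarith [sq_nonneg ((n:ℝ)-1), hnpos, sq_nonneg (n:ℝ), mul_pos hnpos hnpos]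

lemma hre_cont (n : ℕ) : Continuous (hre n) := by
  unfold hre; continuity

lemma hreC_cont (n : ℕ) (d : ℂ) : Continuous (fun y : ℝ => d * (hre n y : ℂ)) :=
  continuous_const.mul (Complex.continuous_ofReal.comp (hre_cont n))

lemma exists_good (Y : Submodule ℂ (ℂ × ℂ)) (hY0 : Y ≠ ⊥)
    (hY1 : Y ≠ Submodule.span ℂ {((0, 1) : ℂ × ℂ)}) :
    ∃ p : ℂ × ℂ, p ∈ Y ∧ p.1 ≠ 0 := by
  by_contra hc
  push_neg at hc
  obtain ⟨p, hpY, hp0⟩ := Submodule.exists_mem_ne_zero_of_ne_bot hY0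
  have hp1 : p.1 = 0 := hc p hpY
  have hp2 : p.2 ≠ 0 := by
    intro h; apply hp0; exact Prod.ext hp1 h
  apply hY1
  apply le_antisymm
  · intro q hq
    rw [Submodule.mem_span_singleton]
    exact ⟨q.2, by simp [Prod.ext_iff, hc q hq]⟩
  · rw [Submodule.span_le, Set.singleton_subset_iff]
    have : ((0,1) : ℂ × ℂ) = p.2⁻¹ • p := by
      ext <;> simp [hp1, inv_mul_cancel₀ hp2]
    rw [this]
    exact Y.smul_mem _ hpY

lemma hre_bound (n : ℕ) (x : ℝ) (hx : x ∈ Set.Ioo (0:ℝ) 1) (d : ℂ) :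
    ‖d * (hre n x : ℂ)‖ ≤ ‖d‖ * (2*((n:ℝ)+1)) := by
  rw [norm_mul, Complex.norm_real]
  apply mul_le_mul_of_nonneg_left _ (norm_nonneg d)
  unfold hre
  rw [Real.norm_eq_abs, abs_mul]
  have h1 : |(1-x)^n - x^n| ≤ 2 := by
    have a1 : |(1-x)^n| ≤ 1 := by
      rw [abs_pow]; apply pow_le_one₀ (abs_nonneg _); rw [abs_le]; constructor <;> nlinarith [hx.1, hx.2]
    have a2 : |x^n| ≤ 1 := by
      rw [abs_pow]; apply pow_le_one₀ (abs_nonneg _); rw [abs_le]; constructor <;> nlinarith [hx.1, hx.2]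
    calc |(1-x)^n - x^n| ≤ |(1-x)^n| + |x^n| := abs_sub _ _
      _ ≤ 2 := by linarith
  have h2 : |((n:ℝ)+1)| = (n:ℝ)+1 := abs_of_pos (by positivity)
  rw [h2]
  nlinarith [Nat.cast_nonneg (α := ℝ) n]


-- complex versions of integral identities
lemma Iprim_dh (n : ℕ) (d : ℂ) (x : ℝ) :
    Iprim (fun y => d * (hre n y : ℂ)) x
      = d * ((1 - (1-x)^(n+1) - x^(n+1) : ℝ) : ℂ) := by
  unfold Iprim
  rw [intervalIntegral.integral_const_mul, intervalIntegral.integral_ofReal, int_hre]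

lemma Pfun_dh (n : ℕ) (d : ℂ) (x : ℝ) :
    Pfun (fun y => d * (hre n y : ℂ)) x = d * ((phi n x : ℝ) : ℂ) := by
  unfold Pfun
  have h1 : (∫ z in (0:ℝ)..1, Iprim (fun y => d * (hre n y : ℂ)) z)
      = d * (((n:ℝ)/((n:ℝ)+2) : ℝ) : ℂ) := by
    simp only [Iprim_dh]
    rw [intervalIntegral.integral_const_mul]
    congr 1
    rw [show (fun z : ℝ => ((1 - (1-z)^(n+1) - z^(n+1) : ℝ) : ℂ))
        = fun z : ℝ => (((fun w => 1 - (1-w)^(n+1) - w^(n+1)) z : ℝ) : ℂ) from rfl,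
      intervalIntegral.integral_ofReal]
    norm_cast
    exact_mod_cast congrArg Complex.ofReal (int_F n)
  rw [Iprim_dh, h1, ← mul_sub]
  congr 1
  unfold phi
  push_cast
  have hc : ((n:ℂ)+2) ≠ 0 := by
    intro h
    have := congrArg Complex.re h
    simp at this
    nlinarith [Nat.cast_nonneg (α := ℝ) n]
  field_simp
  ring

lemma mu0_dh (n : ℕ) (d : ℂ) : mu0 (fun y => d * (hre n y : ℂ)) = 0 := by
  unfold mu0
  rw [intervalIntegral.integral_const_mul, intervalIntegral.integral_ofReal, int_hre]
  simp [zero_pow (Nat.succ_ne_zero n)]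

lemma mu1_dh (n : ℕ) (d : ℂ) :
    mu1 (fun y => d * (hre n y : ℂ)) = d * (((n:ℝ)/((n:ℝ)+2) : ℝ) : ℂ) := by
  unfold mu1
  have : ∀ x : ℝ, ((1 - x : ℝ) : ℂ) * (d * (hre n x : ℂ))
      = d * (((1-x) * hre n x : ℝ) : ℂ) := by
    intro x; push_cast; ring
  simp only [this]
  rw [intervalIntegral.integral_const_mul, intervalIntegral.integral_ofReal, int_mu1_hre]


set_option maxHeartbeats 1000000 in
/-- Density of `V_Y = {f ∈ L² : (μ₀(f), μ₁(f)) ∈ Y}` in `H⁻¹(T)` for any subspace `Y` of `ℂ²`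
with `Y ≠ {0}` and `Y ≠ {0}×ℂ`. -/
theorem stmt8 (Y : Submodule ℂ (ℂ × ℂ))
    (hY0 : Y ≠ ⊥)
    (hY1 : Y ≠ Submodule.span ℂ {((0, 1) : ℂ × ℂ)}) :
    ∀ g : ℝ → ℂ, MemLp g 2 (volume.restrict (Set.Ioo (0:ℝ) 1)) →
    ∀ ε : ℝ, 0 < ε →
      ∃ f : ℝ → ℂ, MemLp f 2 (volume.restrict (Set.Ioo (0:ℝ) 1)) ∧
        (mu0 f, mu1 f) ∈ Y ∧
        ((∫ x in (0:ℝ)..1, ‖Pfun (fun y => g y - f y) x‖ ^ 2) +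
          ‖mu0 (fun y => g y - f y)‖ ^ 2) ^ ((1:ℝ)/2) < ε := by
  intro g hg ε hε
  haveI hfin : IsFiniteMeasure (volume.restrict (Set.Ioo (0:ℝ) 1)) := by
    constructor
    rw [Measure.restrict_apply_univ, Real.volume_Ioo]
    exact ENNReal.ofReal_lt_top
  obtain ⟨⟨a, b⟩, habY, ha⟩ := exists_good Y hY0 hY1
  simp only at ha
  -- K
  set t : ℂ := mu0 g / a with ht
  set K : ℂ := mu1 g - t * b with hK
  -- choose n
  obtain ⟨n, hn⟩ := exists_nat_gt (135*(‖K‖^2+1)/ε^2)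
  have hrhs : (0:ℝ) < 135*(‖K‖^2+1)/ε^2 := by positivity
  have hn1 : 1 ≤ n := by
    rcases Nat.eq_zero_or_pos n with h0 | h
    · subst h0; rw [Nat.cast_zero] at hn; linarith
    · exact h
  have hnpos : (0:ℝ) < n := by exact_mod_cast hn1
  -- d
  set d : ℂ := K * ((((n:ℝ)+2)/(n:ℝ) : ℝ) : ℂ) with hd
  -- f
  set f : ℝ → ℂ := fun y => g y - d * (hre n y : ℂ) with hf
  -- integrabilities
  have hIoo : IntegrableOn g (Set.Ioo (0:ℝ) 1) volume := hg.integrable (by norm_num : (1:ENNReal) ≤ 2)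
  have hIoc : IntegrableOn g (Set.Ioc (0:ℝ) 1) volume :=
    hIoo.congr_set_ae Ioo_ae_eq_Ioc.symm
  have hgInt : IntervalIntegrable g volume 0 1 :=
    (intervalIntegrable_iff_integrableOn_Ioc_of_le (by norm_num)).mpr hIoc
  have hhInt : IntervalIntegrable (fun y : ℝ => d * (hre n y : ℂ)) volume 0 1 :=
    Continuous.intervalIntegrable (hreC_cont n d) 0 1
  have hg1Int : IntervalIntegrable (fun x : ℝ => ((1 - x : ℝ) : ℂ) * g x) volume 0 1 := by
    rw [intervalIntegrable_iff_integrableOn_Ioc_of_le (by norm_num)]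
    apply Integrable.bdd_mul (c := 1) hIoc
    · exact Continuous.aestronglyMeasurable (by continuity)
    · rw [ae_restrict_iff' measurableSet_Ioc]
      filter_upwards with x hx
      rw [Complex.norm_real, Real.norm_eq_abs, abs_le]
      constructor <;> nlinarith [hx.1, hx.2]
  have hh1Int : IntervalIntegrable (fun x : ℝ => ((1 - x : ℝ) : ℂ) * (d * (hre n x : ℂ))) volume 0 1 :=
    Continuous.intervalIntegrable ((Complex.continuous_ofReal.comp (by continuity)).mul (hreC_cont n d)) 0 1
  -- Memℒp f
  have hfLp : MemLp f 2 (volume.restrict (Set.Ioo (0:ℝ) 1)) := by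
    apply hg.sub
    apply MemLp.of_bound (Continuous.aestronglyMeasurable (hreC_cont n d))
      (‖d‖ * (2*((n:ℝ)+1)))
    rw [ae_restrict_iff' measurableSet_Ioo]
    filter_upwards with x hx
    exact hre_bound n x hx d
  -- mu0 f
  have hmu0f : mu0 f = mu0 g := by
    unfold mu0
    rw [hf]
    rw [intervalIntegral.integral_sub hgInt hhInt]
    have := mu0_dh n d
    unfold mu0 at this
    rw [this, sub_zero]
  -- d * (n/(n+2)) = K
  have hdK : d * (((n:ℝ)/((n:ℝ)+2) : ℝ) : ℂ) = K := by
    rw [hd, mul_assoc, ← Complex.ofReal_mul]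
    have : (((n:ℝ)+2)/(n:ℝ)) * ((n:ℝ)/((n:ℝ)+2)) = 1 := by
      field_simp
    rw [this, Complex.ofReal_one, mul_one]
  -- mu1 f
  have hmu1f : mu1 f = t * b := by
    unfold mu1
    rw [hf]
    have hsplit : ∀ x : ℝ, ((1 - x : ℝ) : ℂ) * (g x - d * (hre n x : ℂ))
        = ((1 - x : ℝ) : ℂ) * g x - ((1 - x : ℝ) : ℂ) * (d * (hre n x : ℂ)) := by
      intro x; ring
    simp only [hsplit]
    rw [intervalIntegral.integral_sub hg1Int hh1Int]
    have h2 := mu1_dh n d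
    unfold mu1 at h2
    simp only at h2
    rw [h2, hdK, hK]
    rw [show (∫ x in (0:ℝ)..1, ((1 - x : ℝ) : ℂ) * g x) = mu1 g from rfl]
    ring
  -- membership
  have hmem : (mu0 f, mu1 f) ∈ Y := by
    rw [hmu0f, hmu1f]
    have : ((mu0 g, t * b) : ℂ × ℂ) = t • ((a, b) : ℂ × ℂ) := by
      rw [Prod.smul_mk, smul_eq_mul, smul_eq_mul, ht, div_mul_cancel₀ _ ha]
    rw [this]
    exact Y.smul_mem _ habY
  -- the error
  have hdiff : (fun y => g y - f y) = fun y => d * (hre n y : ℂ) := by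
    funext y; rw [hf]; ring
  have hPnorm : ∀ x : ℝ, ‖Pfun (fun y => g y - f y) x‖^2 = ‖d‖^2 * (phi n x)^2 := by
    intro x
    rw [hdiff, Pfun_dh, norm_mul, Complex.norm_real, Real.norm_eq_abs, mul_pow, sq_abs]
  have hInt1 : (∫ x in (0:ℝ)..1, ‖Pfun (fun y => g y - f y) x‖ ^ 2)
      = ‖d‖^2 * ∫ x in (0:ℝ)..1, (phi n x)^2 := by
    simp only [hPnorm]
    rw [intervalIntegral.integral_const_mul]
  have hmu0diff : ‖mu0 (fun y => g y - f y)‖^2 = 0 := by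
    rw [hdiff, mu0_dh]
    simp
  -- bound on ‖d‖
  have hdb : ‖d‖^2 ≤ 9 * ‖K‖^2 := by
    rw [hd, norm_mul, Complex.norm_real, Real.norm_eq_abs,
      abs_of_pos (by positivity : (0:ℝ) < ((n:ℝ)+2)/(n:ℝ))]
    have hn1' : (1:ℝ) ≤ (n:ℝ) := by exact_mod_cast hn1
    have h3 : ((n:ℝ)+2)/(n:ℝ) ≤ 3 := by
      rw [div_le_iff₀ hnpos]; linarith
    have hr0 : (0:ℝ) ≤ ((n:ℝ)+2)/(n:ℝ) := by positivity
    nlinarith [mul_self_le_mul_self hr0 h3, sq_nonneg (‖K‖)]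
  have hphiInt : (0:ℝ) ≤ ∫ x in (0:ℝ)..1, (phi n x)^2 :=
    intervalIntegral.integral_nonneg (by norm_num) (fun x _ => sq_nonneg _)
  have hphile : ∫ x in (0:ℝ)..1, (phi n x)^2 ≤ 15/(n:ℝ) := int_phi_sq n hn1
  -- total bound
  have hX : (∫ x in (0:ℝ)..1, ‖Pfun (fun y => g y - f y) x‖ ^ 2)
      + ‖mu0 (fun y => g y - f y)‖ ^ 2 < ε^2 := by
    rw [hInt1, hmu0diff, add_zero]
    have step1 : ‖d‖^2 * ∫ x in (0:ℝ)..1, (phi n x)^2 ≤ 9*‖K‖^2 * (15/(n:ℝ)) := by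
      calc ‖d‖^2 * ∫ x in (0:ℝ)..1, (phi n x)^2
          ≤ ‖d‖^2 * (15/(n:ℝ)) := mul_le_mul_of_nonneg_left hphile (sq_nonneg _)
        _ ≤ 9*‖K‖^2 * (15/(n:ℝ)) := by
            apply mul_le_mul_of_nonneg_right hdb (by positivity)
    have step2 : 9*‖K‖^2 * (15/(n:ℝ)) < ε^2 := by
      rw [div_lt_iff₀ (by positivity : (0:ℝ) < ε^2)] at hn
      rw [mul_div_assoc', div_lt_iff₀ hnpos]
      nlinarith [sq_nonneg ‖K‖]
    linarith
  have hXnn : (0:ℝ) ≤ (∫ x in (0:ℝ)..1, ‖Pfun (fun y => g y - f y) x‖ ^ 2)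
      + ‖mu0 (fun y => g y - f y)‖ ^ 2 := by
    rw [hInt1, hmu0diff, add_zero]
    positivity
  clear_value f d K t
  refine ⟨f, hfLp, hmem, ?_⟩
  calc ((∫ x in (0:ℝ)..1, ‖Pfun (fun y => g y - f y) x‖ ^ 2)
      + ‖mu0 (fun y => g y - f y)‖ ^ 2) ^ ((1:ℝ)/2)
      < (ε^2) ^ ((1:ℝ)/2) := Real.rpow_lt_rpow hXnn hX (by norm_num)
    _ = ε := by
        rw [← Real.rpow_natCast ε 2, ← Real.rpow_mul hε.le]
        norm_num
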